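/- For any graph G of order n, any minimum-weight Roman dominating function f = (B_0, B_1, B_2) on G, and any integer t ≥ 2: γ_R(S(G,t)) ≤ n^{t-2}(n·γ_R(G) − |B_2|). -/

import Mathlib

variable {V : Type*}

/-- A Roman dominating function: every vertex with value 0 has a neighbor with value 2. -/
def IsRDF (G : SimpleGraph V) (f : V → Fin 3) : Prop :=
  ∀ v, f v = 0 → ∃ u, G.Adj u v ∧ f u = 2

/-- The weight of a Roman dominating function. -/
def romanWeight [Fintype V] (f : V → Fin 3) : ℕ := ∑ v, (f v : ℕ)

/-- The Roman domination number. -/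
noncomputable def gammaR [Fintype V] (G : SimpleGraph V) : ℕ :=
  sInf {k | ∃ f : V → Fin 3, IsRDF G f ∧ romanWeight f = k}

/-- A dominating set. -/
def IsDomSet (G : SimpleGraph V) (D : Set V) : Prop :=
  ∀ v, v ∈ D ∨ ∃ u ∈ D, G.Adj u v

/-- The domination number. -/
noncomputable def gamma [Fintype V] (G : SimpleGraph V) : ℕ :=
  sInf {k | ∃ D : Set V, IsDomSet G D ∧ D.ncard = k}

/-- The generalized Sierpiński graph `S(G,t)` on words of length `t` over `V`. -/
def sierpinski (G : SimpleGraph V) (t : ℕ) : SimpleGraph (Fin t → V) where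
  Adj x y := ∃ i : Fin t, (∀ j, j < i → x j = y j) ∧ G.Adj (x i) (y i) ∧
    (∀ j, i < j → x j = y i ∧ y j = x i)
  symm := by
    constructor
    rintro x y ⟨i, h1, h2, h3⟩
    exact ⟨i, fun j hj => (h1 j hj).symm, h2.symm, fun j hj => ⟨(h3 j hj).2, (h3 j hj).1⟩⟩
  loopless := by
    constructor
    rintro x ⟨i, -, h2, -⟩
    exact G.loopless.irrefl _ h2

lemma sum_eval {ι W : Type*} [Fintype ι] [DecidableEq ι] [Fintype W] (i : ι) (F : W → ℕ) :
    ∑ x : ι → W, F (x i) = (Fintype.card W) ^ (Fintype.card ι - 1) * ∑ v, F v := by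
  classical
  rw [← Equiv.sum_comp (Equiv.funSplitAt i W).symm (fun x => F (x i)), Fintype.sum_prod_type]
  have hc : Fintype.card {j : ι // j ≠ i} = Fintype.card ι - 1 := by
    rw [Fintype.card_subtype_compl, Fintype.card_subtype_eq]
  simp [Equiv.funSplitAt_symm_apply, Fintype.card_fun, hc, Finset.mul_sum, mul_comm,
    Finset.sum_mul]

lemma sum_eval2 {ι W : Type*} [Fintype ι] [DecidableEq ι] [Fintype W] (i j : ι) (hij : i ≠ j)
    (F : W → W → ℕ) :
    ∑ x : ι → W, F (x i) (x j) =
      (Fintype.card W) ^ (Fintype.card ι - 2) * ∑ v, ∑ u, F u v := by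
  classical
  rw [← Equiv.sum_comp (Equiv.funSplitAt j W).symm (fun x => F (x i) (x j)),
    Fintype.sum_prod_type]
  have hc : Fintype.card {k : ι // k ≠ j} = Fintype.card ι - 1 := by
    rw [Fintype.card_subtype_compl, Fintype.card_subtype_eq]
  have key : ∀ v : W, ∑ r : {k : ι // k ≠ j} → W, F (r ⟨i, hij⟩) v
      = (Fintype.card W) ^ (Fintype.card ι - 2) * ∑ u, F u v := by
    intro v
    rw [sum_eval (⟨i, hij⟩ : {k : ι // k ≠ j}) (fun u => F u v), hc, Nat.sub_sub]
  simp [Equiv.funSplitAt_symm_apply, hij, key, Finset.mul_sum]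

theorem stmt8 [Fintype V] (G : SimpleGraph V) (n : ℕ) (hn : Fintype.card V = n)
    (f : V → Fin 3) (hf : IsRDF G f) (hmin : romanWeight f = gammaR G)
    (t : ℕ) (ht : 2 ≤ t) :
    gammaR (sierpinski G t) ≤ n ^ (t - 2) * (n * gammaR G - {v | f v = 2}.ncard) := by
  classical
  set γ := gammaR G with hγ
  set b := {v | f v = 2}.ncard with hb
  set l : Fin t := ⟨t - 1, by omega⟩ with hl
  set p : Fin t := ⟨t - 2, by omega⟩ with hp
  have hpl : p ≠ l := by
    simp only [hl, hp, ne_eq, Fin.mk.injEq]; omega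
  set g : (Fin t → V) → Fin 3 :=
    fun x => if x p = x l ∧ f (x l) = 2 then 1 else f (x l) with hg
  -- g is an RDF on the Sierpinski graph
  have hRDF : IsRDF (sierpinski G t) g := by
    intro x hx
    have hx0 : f (x l) = 0 := by
      by_cases h : x p = x l ∧ f (x l) = 2
      · simp only [hg, h, and_self, if_true] at hx; exact absurd hx (by decide)
      · simpa [hg, h] using hx
    obtain ⟨u, hadj, hu2⟩ := hf (x l) hx0
    by_cases hcase : x p = u
    · -- y = update at l and p
      refine ⟨Function.update (Function.update x l u) p (x l), ?_, ?_⟩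
      · refine ⟨p, ?_, ?_, ?_⟩
        · intro j hj
          have hjl : j ≠ l := by
            simp only [hl, hp, Fin.lt_def] at hj ⊢
            intro h; rw [h] at hj; simp at hj; omega
          have hjp : j ≠ p := ne_of_lt hj
          simp [Function.update_of_ne hjp, Function.update_of_ne hjl]
        · have h1 : Function.update (Function.update x l u) p (x l) p = x l := by simp
          rw [h1, hcase]
          exact hadj.symm
        · intro j hj
          have hjl : j = l := by
            simp only [hl, hp, Fin.lt_def] at hj
            ext
            simp only [hl]
            omega
          subst hjl
          refine ⟨?_, ?_⟩
          · simp [Function.update_of_ne (show l ≠ p from hpl.symm), hcase]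
          · simp
      · have h1 : Function.update (Function.update x l u) p (x l) l = u := by
          rw [Function.update_of_ne (show l ≠ p from hpl.symm)]; simp
        have h2 : Function.update (Function.update x l u) p (x l) p = x l := by simp
        simp only [hg, h1, h2]
        rw [if_neg]
        · exact hu2
        · rintro ⟨h, -⟩; exact hadj.ne' h
    · -- y = update at l only
      refine ⟨Function.update x l u, ?_, ?_⟩
      · refine ⟨l, ?_, ?_, ?_⟩
        · intro j hj
          exact Function.update_of_ne (ne_of_lt hj) _ _
        · simpa using hadj
        · intro j hj
          exfalso
          have h3 : (j : ℕ) < t := j.isLt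
          simp only [hl, Fin.lt_def] at hj
          omega
      · have h1 : Function.update x l u l = u := by simp
        have h2 : Function.update x l u p = x p := Function.update_of_ne hpl _ _
        simp only [hg, h1, h2]
        rw [if_neg]
        · exact hu2
        · rintro ⟨h, -⟩; exact hcase h
  -- weight computation
  have hsum_f : ∑ v, (f v : ℕ) = γ := hmin
  have hbsum : ∑ v, (if f v = 2 then 1 else 0) = b := by
    rw [hb, Set.ncard_eq_toFinset_card']
    simp only [Set.toFinset_setOf]
    rw [Finset.card_filter]
  have hble : b ≤ γ := by
    rw [← hbsum, ← hsum_f]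
    apply Finset.sum_le_sum
    intro v _
    split
    · next h => rw [h]; decide
    · exact Nat.zero_le _
  have hbnγ : b ≤ n * γ := by
    rcases Nat.eq_zero_or_pos n with h0 | h1
    · have hVempty : IsEmpty V := by
        rw [← Fintype.card_eq_zero_iff, hn, h0]
      have : γ = 0 := by rw [← hsum_f]; simp
      have hb0 : b = 0 := by rw [← hbsum]; simp
      omega
    · calc b ≤ γ := hble
        _ ≤ n * γ := Nat.le_mul_of_pos_left γ h1
  have hA : ∑ x : Fin t → V, (f (x l) : ℕ) = n ^ (t - 1) * γ := by
    rw [sum_eval l (fun v => (f v : ℕ)), hn, Fintype.card_fin, hsum_f]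
  have hB : ∑ x : Fin t → V, (if x p = x l ∧ f (x l) = 2 then 1 else 0) = n ^ (t - 2) * b := by
    rw [sum_eval2 p l hpl (fun u v => if u = v ∧ f v = 2 then 1 else 0), hn, Fintype.card_fin]
    congr 1
    rw [← hbsum]
    apply Finset.sum_congr rfl
    intro v _
    by_cases h : f v = 2
    · simp [h]
    · simp [h]
  have hW : romanWeight g + n ^ (t - 2) * b = n ^ (t - 1) * γ := by
    rw [← hA, ← hB, romanWeight, ← Finset.sum_add_distrib]
    apply Finset.sum_congr rfl
    intro x _
    by_cases h : x p = x l ∧ f (x l) = 2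
    · simp only [hg, h, if_true, and_self]
      decide
    · simp [hg, h]
  have hpow : n ^ (t - 1) = n ^ (t - 2) * n := by
    have h3 : t - 1 = (t - 2) + 1 := by clear * - ht; omega
    rw [h3, pow_succ]
  have hfinal : romanWeight g = n ^ (t - 2) * (n * γ - b) := by
    have h2 : n ^ (t - 2) * b ≤ n ^ (t - 2) * (n * γ) := Nat.mul_le_mul_left _ hbnγ
    rw [Nat.mul_sub]
    rw [hpow, mul_assoc] at hW
    clear * - hW h2
    omega
  have hmem : romanWeight g ∈ {k | ∃ f' : (Fin t → V) → Fin 3,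
      IsRDF (sierpinski G t) f' ∧ romanWeight f' = k} := ⟨g, hRDF, rfl⟩
  calc gammaR (sierpinski G t) ≤ romanWeight g := Nat.sInf_le hmem
    _ = n ^ (t - 2) * (n * γ - b) := hfinal
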